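/- Let c be an n-ary monotonic constraint relative to a domain D (that is, for every variable i there is a polarity ε i ∈ {1, −1} such that whenever θ ∈ c satisfies (inf_D j : ℝ) ≤ θ j ≤ (sup_D j : ℝ) for all j, and θ' : Fin n → ℝ agrees with θ on all variables other than i, satisfies (inf_D i : ℝ) ≤ θ' i ≤ (sup_D i : ℝ), and (ε i) · θ' i ≤ (ε i) · θ i, then θ' ∈ c). If D is bounds(R) consistent for c, then D is domain consistent for c; consequently bounds(R), bounds(Z), bounds(D) and domain consistency for c are all equivalent. -/

import Mathlib

/-- An integer valuation is an integer solution of constraint `c` if its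
coercion to reals lies in `c`. -/
def IsIntSolution {n : ℕ} (c : Set (Fin n → ℝ)) (θ : Fin n → ℤ) : Prop :=
  (fun j => (θ j : ℝ)) ∈ c

/-- `D` is bounds(D) consistent for `c`. -/
def BoundsDConsistent {n : ℕ} (D : Fin n → Finset ℤ) (hD : ∀ i, (D i).Nonempty)
    (c : Set (Fin n → ℝ)) : Prop :=
  ∀ i : Fin n, ∀ d ∈ ({(D i).min' (hD i), (D i).max' (hD i)} : Set ℤ),
    ∃ θ : Fin n → ℤ, IsIntSolution c θ ∧ θ i = d ∧ ∀ j, θ j ∈ D j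

/-- `D` is bounds(Z) consistent for `c`. -/
def BoundsZConsistent {n : ℕ} (D : Fin n → Finset ℤ) (hD : ∀ i, (D i).Nonempty)
    (c : Set (Fin n → ℝ)) : Prop :=
  ∀ i : Fin n, ∀ d ∈ ({(D i).min' (hD i), (D i).max' (hD i)} : Set ℤ),
    ∃ θ : Fin n → ℤ, IsIntSolution c θ ∧ θ i = d ∧
      ∀ j, (D j).min' (hD j) ≤ θ j ∧ θ j ≤ (D j).max' (hD j)

/-- `D` is bounds(R) consistent for `c`. -/
def BoundsRConsistent {n : ℕ} (D : Fin n → Finset ℤ) (hD : ∀ i, (D i).Nonempty)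
    (c : Set (Fin n → ℝ)) : Prop :=
  ∀ i : Fin n, ∀ d ∈ ({(D i).min' (hD i), (D i).max' (hD i)} : Set ℤ),
    ∃ θ : Fin n → ℝ, θ ∈ c ∧ θ i = (d : ℝ) ∧
      ∀ j, ((D j).min' (hD j) : ℝ) ≤ θ j ∧ θ j ≤ ((D j).max' (hD j) : ℝ)

/-- `D` is domain consistent for `c`. -/
def DomainConsistent {n : ℕ} (D : Fin n → Finset ℤ) (c : Set (Fin n → ℝ)) : Prop :=
  ∀ i : Fin n, ∀ d ∈ D i,
    ∃ θ : Fin n → ℤ, IsIntSolution c θ ∧ θ i = d ∧ ∀ j, θ j ∈ D j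

theorem monotonic_boundsR_imp_domain {n : ℕ} (hn : 1 ≤ n)
    (D : Fin n → Finset ℤ) (hD : ∀ i, (D i).Nonempty) (c : Set (Fin n → ℝ))
    (ε : Fin n → ℝ) (hε : ∀ i, ε i = 1 ∨ ε i = -1)
    (hmono : ∀ i : Fin n, ∀ θ ∈ c,
      (∀ j, ((D j).min' (hD j) : ℝ) ≤ θ j ∧ θ j ≤ ((D j).max' (hD j) : ℝ)) →
      ∀ θ' : Fin n → ℝ, (∀ j, j ≠ i → θ' j = θ j) →
        (((D i).min' (hD i) : ℝ) ≤ θ' i ∧ θ' i ≤ ((D i).max' (hD i) : ℝ)) →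
        ε i * θ' i ≤ ε i * θ i → θ' ∈ c) :
    (BoundsRConsistent D hD c → DomainConsistent D c) ∧
    (BoundsRConsistent D hD c ↔ BoundsZConsistent D hD c) ∧
    (BoundsRConsistent D hD c ↔ BoundsDConsistent D hD c) ∧
    (BoundsRConsistent D hD c ↔ DomainConsistent D c) := by
  classical
  have hmain : BoundsRConsistent D hD c → DomainConsistent D c := by
    intro hR i d hd
    -- choose b, the extreme bound of D i in the direction of ε i
    obtain ⟨b, hbmem, hbd, hbD⟩ :
        ∃ b ∈ ({(D i).min' (hD i), (D i).max' (hD i)} : Set ℤ),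
          ε i * (d : ℝ) ≤ ε i * (b : ℝ) ∧ b ∈ D i := by
      rcases hε i with h | h
      · refine ⟨(D i).max' (hD i), Or.inr rfl, ?_, (D i).max'_mem (hD i)⟩
        have : ((d:ℝ)) ≤ ((D i).max' (hD i) : ℝ) := by exact_mod_cast (D i).le_max' d hd
        rw [h]; simpa using this
      · refine ⟨(D i).min' (hD i), Or.inl rfl, ?_, (D i).min'_mem (hD i)⟩
        have : (((D i).min' (hD i) : ℝ)) ≤ (d:ℝ) := by exact_mod_cast (D i).min'_le d hd
        rw [h]; nlinarith [this]
    obtain ⟨θ₀, hθ₀c, hθ₀i, hθ₀b⟩ := hR i b hbmem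
    -- the integer target
    set tInt : Fin n → ℤ := fun j =>
      if j = i then d else if ε j = 1 then (D j).min' (hD j) else (D j).max' (hD j)
      with htInt
    have htgt_lb : ∀ j, ((D j).min' (hD j) : ℝ) ≤ (tInt j : ℝ) ∧
        (tInt j : ℝ) ≤ ((D j).max' (hD j) : ℝ) := by
      intro j
      by_cases hji : j = i
      · subst hji
        simp only [htInt, if_pos rfl]
        exact ⟨by exact_mod_cast (D j).min'_le d hd,
               by exact_mod_cast (D j).le_max' d hd⟩
      · rcases hε j with h | h
        · simp only [htInt, if_neg hji, if_pos h]
          exact ⟨le_refl _, by exact_mod_cast (D j).min'_le _ ((D j).max'_mem (hD j))⟩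
        · have h1 : ε j ≠ 1 := by rw [h]; norm_num
          simp only [htInt, if_neg hji, if_neg h1]
          exact ⟨by exact_mod_cast (D j).min'_le _ ((D j).max'_mem (hD j)), le_refl _⟩
    have hdir : ∀ j, ε j * (tInt j : ℝ) ≤ ε j * θ₀ j := by
      intro j
      by_cases hji : j = i
      · subst hji
        simp only [htInt, if_pos rfl]
        rw [hθ₀i]; exact hbd
      · rcases hε j with h | h
        · simp only [htInt, if_neg hji, if_pos h, h, one_mul]
          exact (hθ₀b j).1
        · have h1 : ε j ≠ 1 := by rw [h]; norm_num
          simp only [htInt, if_neg hji, if_neg h1]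
          rw [h]; nlinarith [(hθ₀b j).2]
    -- iterate monotonicity over a finite set of coordinates
    have key : ∀ S : Finset (Fin n),
        (fun j => if j ∈ S then (tInt j : ℝ) else θ₀ j) ∈ c ∧
        (∀ j, ((D j).min' (hD j) : ℝ) ≤ (if j ∈ S then (tInt j : ℝ) else θ₀ j) ∧
          (if j ∈ S then (tInt j : ℝ) else θ₀ j) ≤ ((D j).max' (hD j) : ℝ)) := by
      intro S
      induction S using Finset.induction_on with
      | empty => simpa using ⟨hθ₀c, hθ₀b⟩
      | insert _ _ hjS =>
        rename_i j S ih
        constructor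
        · refine hmono j _ ih.1 ih.2 _ ?_ ?_ ?_
          · intro k hk
            simp only [Finset.mem_insert]
            by_cases hkS : k ∈ S <;> simp [hkS, hk]
          · simpa using htgt_lb j
          · simp only [Finset.mem_insert, if_pos (Or.inl rfl), if_neg hjS]
            exact hdir j
        · intro k
          by_cases hkS : k ∈ insert j S
          · rw [if_pos hkS]; exact htgt_lb k
          · rw [if_neg hkS]; exact hθ₀b k
    have hall := (key Finset.univ).1
    have heq : (fun j => if j ∈ (Finset.univ : Finset (Fin n)) then (tInt j : ℝ) else θ₀ j)
        = fun j => (tInt j : ℝ) := by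
      funext j; simp
    rw [heq] at hall
    refine ⟨tInt, hall, by simp [htInt], ?_⟩
    intro j
    by_cases hji : j = i
    · subst hji; simpa [htInt] using hd
    · rcases hε j with h | h
      · simpa [htInt, hji, h] using (D j).min'_mem (hD j)
      · have h1 : ε j ≠ 1 := by rw [h]; norm_num
        simpa [htInt, hji, h1] using (D j).max'_mem (hD j)
  have hDtoD : DomainConsistent D c → BoundsDConsistent D hD c := by
    intro h i d hd
    apply h i d
    rcases hd with h' | h'
    · rw [h']; exact (D i).min'_mem (hD i)
    · rw [h']; exact (D i).max'_mem (hD i)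
  have hDtoZ : BoundsDConsistent D hD c → BoundsZConsistent D hD c := by
    intro h i d hd
    obtain ⟨θ, h1, h2, h3⟩ := h i d hd
    exact ⟨θ, h1, h2, fun j => ⟨(D j).min'_le _ (h3 j), (D j).le_max' _ (h3 j)⟩⟩
  have hZtoR : BoundsZConsistent D hD c → BoundsRConsistent D hD c := by
    intro h i d hd
    obtain ⟨θ, h1, h2, h3⟩ := h i d hd
    exact ⟨fun j => (θ j : ℝ), h1, show (θ i : ℝ) = (d : ℝ) by exact_mod_cast h2,
      fun j => ⟨show ((D j).min' (hD j) : ℝ) ≤ (θ j : ℝ) by exact_mod_cast (h3 j).1,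
        show (θ j : ℝ) ≤ ((D j).max' (hD j) : ℝ) by exact_mod_cast (h3 j).2⟩⟩
  refine ⟨hmain, ?_, ?_, ?_⟩
  · exact ⟨fun h => hDtoZ (hDtoD (hmain h)), hZtoR⟩
  · exact ⟨fun h => hDtoD (hmain h), fun h => hZtoR (hDtoZ h)⟩
  · exact ⟨hmain, fun h => hZtoR (hDtoZ (hDtoD h))⟩
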